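/- arXiv:1401.3173 — 6 statements merged into one kernel-verified Lean document; each statement's English description precedes it below -/
import Mathlib

section
/- For every nondeterministic finite automaton M over an alphabet α with a finite state type Q, there exist a finite type S with card S ≤ card Q + 2 and a deterministic finite automaton D over the product alphabet α × Q with state type S such that the projection of the language accepted by D equals the language accepted by M, i.e. π(D.accepts) = M.accepts. -/
/-- The projection of a language over a product alphabet `α × β` onto `α`,
obtained by mapping each letter of each word to its first component. -/
def projLang {α β : Type} (L : Language (α × β)) : Language α :=
  (fun w : List (α × β) => w.map Prod.fst) '' L

open Classical in
/-- The free-input-variable determinization of an NFA: states are `none` (dead),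
`some none` (initial), `some (some q)` (currently at `q`). -/
noncomputable def freeDFA {α Q : Type} (M : NFA α Q) : DFA (α × Q) (Option (Option Q)) where
  step s l := match s with
    | none => none
    | some none => if ∃ p ∈ M.start, l.2 ∈ M.step p l.1 then some (some l.2) else none
    | some (some p) => if l.2 ∈ M.step p l.1 then some (some l.2) else none
  start := some none
  accept := {s | match s with
    | none => False
    | some none => ∃ q ∈ M.start, q ∈ M.accept
    | some (some q) => q ∈ M.accept}

lemma freeDFA_fwd {α Q : Type} (M : NFA α Q) (w : List (α × Q)) :
    ((freeDFA M).eval w = some none → w = []) ∧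
    (∀ q, (freeDFA M).eval w = some (some q) → q ∈ M.eval (w.map Prod.fst)) := by
  induction w using List.reverseRecOn with
  | nil =>
    constructor
    · intro _; rfl
    · intro q h; simp [DFA.eval, DFA.evalFrom, freeDFA] at h
  | append_singleton w l ih =>
    have hstep : (freeDFA M).eval (w ++ [l]) = (freeDFA M).step ((freeDFA M).eval w) l :=
      DFA.evalFrom_append_singleton _ _ _ _
    constructor
    · intro h
      rw [hstep] at h
      rcases hev : (freeDFA M).eval w with _ | _ | p
      · rw [hev] at h; simp [freeDFA] at h
      · rw [hev] at h
        simp only [freeDFA] at h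
        split_ifs at h <;> simp_all
      · rw [hev] at h
        simp only [freeDFA] at h
        split_ifs at h <;> simp_all
    · intro q h
      rw [hstep] at h
      rcases hev : (freeDFA M).eval w with _ | _ | p
      · rw [hev] at h; simp [freeDFA] at h
      · -- from initial state: w = []
        have hw : w = [] := ih.1 hev
        rw [hev] at h
        simp only [freeDFA] at h
        split_ifs at h with hc
        · rcases hc with ⟨p, hp, hq⟩
          simp only [Option.some.injEq] at h
          subst hw
          simp only [List.nil_append, List.map_cons, List.map_nil]
          rw [NFA.eval, NFA.evalFrom, List.foldl_cons, List.foldl_nil]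
          rw [NFA.mem_stepSet]
          exact ⟨p, hp, h ▸ hq⟩
      · rw [hev] at h
        simp only [freeDFA] at h
        split_ifs at h with hc
        · simp only [Option.some.injEq] at h
          have hp := ih.2 p hev
          simp only [List.map_append, List.map_cons, List.map_nil]
          rw [NFA.eval, NFA.evalFrom, List.foldl_append, List.foldl_cons, List.foldl_nil]
          rw [NFA.mem_stepSet]
          exact ⟨p, hp, h ▸ hc⟩

lemma freeDFA_bwd {α Q : Type} (M : NFA α Q) (x : List α) (q : Q)
    (hq : q ∈ M.eval x) (hx : x ≠ []) :
    ∃ w : List (α × Q), w.map Prod.fst = x ∧ (freeDFA M).eval w = some (some q) := by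
  induction x using List.reverseRecOn generalizing q with
  | nil => exact absurd rfl hx
  | append_singleton x a ih =>
    rw [NFA.eval, NFA.evalFrom, List.foldl_append, List.foldl_cons, List.foldl_nil,
      NFA.mem_stepSet] at hq
    rcases hq with ⟨p, hp, hq⟩
    rcases eq_or_ne x [] with rfl | hxne
    · refine ⟨[(a, q)], by simp, ?_⟩
      have : (freeDFA M).eval [(a, q)] = (freeDFA M).step (freeDFA M).start (a, q) := rfl
      rw [this]
      simp only [freeDFA]
      rw [if_pos ⟨p, hp, hq⟩]
    · rcases ih p hp hxne with ⟨w, hwmap, hwev⟩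
      refine ⟨w ++ [(a, q)], by simp [hwmap], ?_⟩
      rw [DFA.eval, DFA.evalFrom_append_singleton, ← DFA.eval, hwev]
      simp only [freeDFA]
      rw [if_pos hq]

/-- For every NFA `M` over `α` with finite state type `Q`, there exist a finite type `S`
with `card S ≤ card Q + 2` and a DFA `D` over `α × Q` with state type `S` such that
`π(D.accepts) = M.accepts`. -/
theorem nfa_to_dfa_free_inputs {α Q : Type} [Fintype Q] (M : NFA α Q) :
    ∃ (S : Type) (_ : Fintype S), Fintype.card S ≤ Fintype.card Q + 2 ∧
      ∃ D : DFA (α × Q) S, projLang D.accepts = M.accepts := by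
  refine ⟨Option (Option Q), inferInstance, by simp, freeDFA M, ?_⟩
  ext x
  constructor
  · rintro ⟨w, hw, rfl⟩
    have hacc : (freeDFA M).eval w ∈ (freeDFA M).accept := hw
    rcases hev : (freeDFA M).eval w with _ | _ | q
    · rw [hev] at hacc; simp [freeDFA] at hacc
    · have hwnil : w = [] := (freeDFA_fwd M w).1 hev
      rw [hev] at hacc
      simp only [freeDFA, Set.mem_setOf_eq] at hacc
      rcases hacc with ⟨q, hq1, hq2⟩
      subst hwnil
      exact ⟨q, hq2, hq1⟩
    · rw [hev] at hacc
      simp only [freeDFA, Set.mem_setOf_eq] at hacc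
      exact ⟨q, hacc, (freeDFA_fwd M w).2 q hev⟩
  · rintro ⟨q, hqacc, hqev⟩
    rcases eq_or_ne x [] with rfl | hxne
    · refine ⟨[], ?_, rfl⟩
      show (freeDFA M).eval [] ∈ (freeDFA M).accept
      have : (freeDFA M).eval [] = some none := rfl
      rw [this]
      exact ⟨q, hqev, hqacc⟩
    · rcases freeDFA_bwd M x q hqev hxne with ⟨w, hwmap, hwev⟩
      refine ⟨w, ?_, hwmap⟩
      show (freeDFA M).eval w ∈ (freeDFA M).accept
      rw [hwev]
      exact hqacc
end

section
/- Let σ be a type and ts = [(S₁,b₁),…,(Sₙ,bₙ)] a list of n pairs of a subset of σ and a Boolean star flag. Then there exists a nondeterministic finite automaton over σ with state type Fin (n+1) whose accepted language equals the chain language L(ts). -/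
/-- The single-symbol language of a set `S ⊆ σ`: all length-one words whose letter lies in `S`. -/
def singleLang {σ : Type} (S : Set σ) : Language σ := {w | ∃ a ∈ S, w = [a]}

/-- The chain language of a list `ts = [(S₁,b₁),…,(Sₙ,bₙ)]`: the concatenation
`L₁ * ⋯ * Lₙ` where `Lᵢ` is the single-symbol language of `Sᵢ` if `bᵢ = false`, and its
Kleene star if `bᵢ = true`.  This is the language of the SERE chain `x₁y₁; …; xₙyₙ`. -/
def chainLang {σ : Type} (ts : List (Set σ × Bool)) : Language σ :=
  (ts.map fun p => if p.2 then KStar.kstar (singleLang p.1) else singleLang p.1).prod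

namespace ChainAux

open scoped Classical

variable {σ Q Q' : Type}

lemma evalFrom_cons (M : NFA σ Q) (T : Set Q) (a : σ) (w : List σ) :
    M.evalFrom T (a :: w) = M.evalFrom (M.stepSet T a) w := rfl

lemma stepSet_union (M : NFA σ Q) (A B : Set Q) (a : σ) :
    M.stepSet (A ∪ B) a = M.stepSet A a ∪ M.stepSet B a :=
  Set.biUnion_union A B _

lemma evalFrom_empty (M : NFA σ Q) (w : List σ) : M.evalFrom ∅ w = ∅ := by
  induction w with
  | nil => rfl
  | cons a w ih => rw [evalFrom_cons, M.stepSet_empty, ih]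

lemma evalFrom_union (M : NFA σ Q) (A B : Set Q) (w : List σ) :
    M.evalFrom (A ∪ B) w = M.evalFrom A w ∪ M.evalFrom B w := by
  induction w generalizing A B with
  | nil => rfl
  | cons a w ih => rw [evalFrom_cons, stepSet_union, ih]; rfl

/-- Simulation lemma: if `N` mimics `M` on `f`-images of states, then evaluation from an
`f`-image of a set is the `f`-image of the evaluation. -/
lemma evalFrom_image (f : Q → Q') (M : NFA σ Q) (N : NFA σ Q')
    (hstep : ∀ p a, N.step (f p) a = f '' M.step p a)
    (T : Set Q) (w : List σ) :
    N.evalFrom (f '' T) w = f '' M.evalFrom T w := by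
  induction w generalizing T with
  | nil => rfl
  | cons a w ih =>
    have hss : N.stepSet (f '' T) a = f '' M.stepSet T a := by
      show (⋃ q ∈ f '' T, N.step q a) = f '' ⋃ p ∈ T, M.step p a
      rw [Set.biUnion_image, Set.image_iUnion₂]
      simp only [hstep]
    rw [evalFrom_cons, evalFrom_cons, hss, ih]

/-- NFA for the language `singleLang S * M.accepts`. -/
def consSym (S : Set σ) (M : NFA σ Q) : NFA σ (Option Q) where
  step q a := match q with
    | none => if a ∈ S then some '' M.start else ∅
    | some p => some '' M.step p a
  start := {none}
  accept := some '' M.accept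

/-- NFA for the language `(singleLang S)∗ * M.accepts`. -/
def consStar (S : Set σ) (M : NFA σ Q) : NFA σ (Option Q) where
  step q a := match q with
    | none => (if a ∈ S then {none} else ∅) ∪ some '' M.stepSet M.start a
    | some p => some '' M.step p a
  start := {none}
  accept := some '' M.accept ∪ (if [] ∈ M.accepts then {none} else ∅)

lemma consSym_evalFrom_some (S : Set σ) (M : NFA σ Q) (T : Set Q) (w : List σ) :
    (consSym S M).evalFrom (some '' T) w = some '' M.evalFrom T w :=
  evalFrom_image some M (consSym S M) (fun _ _ => rfl) T w

lemma consStar_evalFrom_some (S : Set σ) (M : NFA σ Q) (T : Set Q) (w : List σ) :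
    (consStar S M).evalFrom (some '' T) w = some '' M.evalFrom T w :=
  evalFrom_image some M (consStar S M) (fun _ _ => rfl) T w

lemma mem_singleLang_mul {S : Set σ} {L : Language σ} {w : List σ} :
    w ∈ singleLang S * L ↔ ∃ a ∈ S, ∃ v ∈ L, w = a :: v := by
  rw [Language.mem_mul]
  constructor
  · rintro ⟨u, ⟨a, ha, rfl⟩, v, hv, rfl⟩
    exact ⟨a, ha, v, hv, rfl⟩
  · rintro ⟨a, ha, v, hv, rfl⟩
    exact ⟨[a], ⟨a, ha, rfl⟩, v, hv, rfl⟩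

lemma mem_kstar_singleLang {S : Set σ} {w : List σ} :
    w ∈ KStar.kstar (singleLang S) ↔ ∀ a ∈ w, a ∈ S := by
  rw [Language.mem_kstar]
  constructor
  · rintro ⟨L, rfl, hL⟩ a ha
    rw [List.mem_flatten] at ha
    obtain ⟨y, hy, hay⟩ := ha
    obtain ⟨b, hb, rfl⟩ := hL y hy
    simp at hay; subst hay; exact hb
  · intro h
    refine ⟨w.map fun a => [a], ?_, ?_⟩
    · clear h
      induction w with
      | nil => rfl
      | cons a w ih =>
        simp only [List.map_cons, List.flatten_cons, List.singleton_append]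
        rw [← ih]
    · rintro y hy
      simp only [List.mem_map] at hy
      obtain ⟨a, ha, rfl⟩ := hy
      exact ⟨a, h a ha, rfl⟩

theorem consSym_accepts (S : Set σ) (M : NFA σ Q) :
    (consSym S M).accepts = singleLang S * M.accepts := by
  ext w
  rw [NFA.mem_accepts, mem_singleLang_mul]
  have hacc : (consSym S M).accept = some '' M.accept := rfl
  have hstart : (consSym S M).start = {none} := rfl
  rw [hacc, hstart]
  cases w with
  | nil =>
    simp only [NFA.evalFrom_nil]
    constructor
    · rintro ⟨q, hq, hq'⟩
      rw [Set.mem_image] at hq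
      obtain ⟨p, -, rfl⟩ := hq
      exact absurd hq' (by simp)
    · rintro ⟨a, -, v, -, h⟩; simp at h
  | cons a v =>
    rw [evalFrom_cons]
    have hstep : (consSym S M).stepSet {none} a = (consSym S M).step none a := by
      simp [NFA.stepSet]
    rw [hstep]
    by_cases haS : a ∈ S
    · have : (consSym S M).step none a = some '' M.start := by simp [consSym, haS]
      rw [this, consSym_evalFrom_some]
      constructor
      · rintro ⟨q, hq, hq'⟩
        rw [Set.mem_image] at hq
        obtain ⟨p, hp, rfl⟩ := hq
        rw [Set.mem_image] at hq'
        obtain ⟨p', hp', hpp'⟩ := hq'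
        rw [Option.some_inj] at hpp'
        subst hpp'
        exact ⟨a, haS, v, M.mem_accepts.2 ⟨p', hp, hp'⟩, rfl⟩
      · rintro ⟨b, hb, v', hv', heq⟩
        obtain ⟨rfl, rfl⟩ : b = a ∧ v' = v := by simpa using heq.symm
        obtain ⟨p, hp, hp'⟩ := M.mem_accepts.1 hv'
        exact ⟨some p, Set.mem_image_of_mem _ hp, Set.mem_image_of_mem _ hp'⟩
    · have : (consSym S M).step none a = ∅ := by simp [consSym, haS]
      rw [this, evalFrom_empty]
      constructor
      · rintro ⟨q, -, hq⟩; exact absurd hq (Set.notMem_empty q)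
      · rintro ⟨b, hb, v', -, heq⟩
        obtain ⟨rfl, rfl⟩ : b = a ∧ v' = v := by simpa using heq.symm
        exact absurd hb haS

lemma consStar_none_mem (S : Set σ) (M : NFA σ Q) (w : List σ) :
    none ∈ (consStar S M).evalFrom {none} w ↔ ∀ a ∈ w, a ∈ S := by
  induction w with
  | nil => simp
  | cons a w ih =>
    rw [evalFrom_cons]
    have hstep : (consStar S M).stepSet {none} a = (consStar S M).step none a := by
      simp [NFA.stepSet]
    rw [hstep]
    have : (consStar S M).step none a
        = (if a ∈ S then {none} else ∅) ∪ some '' M.stepSet M.start a := rfl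
    rw [this, evalFrom_union, consStar_evalFrom_some]
    by_cases haS : a ∈ S
    · rw [if_pos haS]
      constructor
      · rintro (h | h)
        · intro b hb
          rcases List.mem_cons.1 hb with rfl | hb
          · exact haS
          · exact ih.1 h b hb
        · rw [Set.mem_image] at h
          obtain ⟨p, -, hp⟩ := h
          exact absurd hp (Option.some_ne_none p)
      · intro h
        exact Or.inl (ih.2 fun b hb => h b (List.mem_cons_of_mem _ hb))
    · rw [if_neg haS, evalFrom_empty]
      constructor
      · rintro (h | h)
        · exact absurd h (Set.notMem_empty _)
        · rw [Set.mem_image] at h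
          obtain ⟨p, -, hp⟩ := h
          exact absurd hp (Option.some_ne_none p)
      · intro h; exact absurd (h a List.mem_cons_self) haS

lemma consStar_some_mem (S : Set σ) (M : NFA σ Q) (w : List σ) (p : Q) :
    some p ∈ (consStar S M).evalFrom {none} w ↔
      ∃ u a v, w = u ++ a :: v ∧ (∀ x ∈ u, x ∈ S) ∧
        p ∈ M.evalFrom (M.stepSet M.start a) v := by
  induction w generalizing p with
  | nil =>
    simp only [NFA.evalFrom_nil, Set.mem_singleton_iff]
    constructor
    · intro h; exact absurd h (by simp)
    · rintro ⟨u, a, v, h, -⟩; exact absurd h (by simp)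
  | cons b w ih =>
    rw [evalFrom_cons]
    have hstep : (consStar S M).stepSet {none} b = (consStar S M).step none b := by
      simp [NFA.stepSet]
    rw [hstep]
    have : (consStar S M).step none b
        = (if b ∈ S then {none} else ∅) ∪ some '' M.stepSet M.start b := rfl
    rw [this, evalFrom_union, consStar_evalFrom_some]
    constructor
    · rintro (h | h)
      · by_cases hbS : b ∈ S
        · rw [if_pos hbS] at h
          obtain ⟨u, a, v, rfl, hu, hp⟩ := (ih p).1 h
          refine ⟨b :: u, a, v, rfl, ?_, hp⟩
          intro x hx
          rcases List.mem_cons.1 hx with rfl | hx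
          · exact hbS
          · exact hu x hx
        · rw [if_neg hbS, evalFrom_empty] at h
          exact absurd h (Set.notMem_empty _)
      · rw [Set.mem_image] at h
        obtain ⟨q, hq, hq'⟩ := h
        rw [Option.some_inj] at hq'; subst hq'
        exact ⟨[], b, w, rfl, by simp, hq⟩
    · rintro ⟨u, a, v, huav, hu, hp⟩
      cases u with
      | nil =>
        obtain ⟨rfl, rfl⟩ : b = a ∧ w = v := by simpa using huav
        exact Or.inr (Set.mem_image_of_mem _ hp)
      | cons c u =>
        obtain ⟨rfl, rfl⟩ : b = c ∧ w = u ++ a :: v := by simpa using huav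
        refine Or.inl ?_
        rw [if_pos (hu b List.mem_cons_self)]
        exact (ih p).2 ⟨u, a, v, rfl, fun x hx => hu x (List.mem_cons_of_mem _ hx), hp⟩

theorem consStar_accepts (S : Set σ) (M : NFA σ Q) :
    (consStar S M).accepts = KStar.kstar (singleLang S) * M.accepts := by
  ext w
  rw [NFA.mem_accepts, Language.mem_mul]
  have hstart : (consStar S M).start = {none} := rfl
  have haccept : (consStar S M).accept
      = some '' M.accept ∪ (if [] ∈ M.accepts then {none} else ∅) := rfl
  rw [hstart, haccept]
  constructor
  · rintro ⟨q, hq, hq'⟩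
    rw [Set.mem_union] at hq
    rcases hq with hq | hq
    · rw [Set.mem_image] at hq
      obtain ⟨p, hp, rfl⟩ := hq
      obtain ⟨u, a, v, rfl, hu, hv⟩ := (consStar_some_mem S M w p).1 hq'
      refine ⟨u, mem_kstar_singleLang.2 hu, a :: v, ?_, rfl⟩
      exact M.mem_accepts.2 ⟨p, hp, hv⟩
    · by_cases hnil : [] ∈ M.accepts
      · rw [if_pos hnil, Set.mem_singleton_iff] at hq
        subst hq
        exact ⟨w, mem_kstar_singleLang.2 ((consStar_none_mem S M w).1 hq'), [],
          hnil, by simp⟩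
      · rw [if_neg hnil] at hq; exact absurd hq (Set.notMem_empty _)
  · rintro ⟨u, hu, v, hv, rfl⟩
    rw [mem_kstar_singleLang] at hu
    cases v with
    | nil =>
      refine ⟨none, ?_, ?_⟩
      · rw [Set.mem_union, if_pos hv]; exact Or.inr rfl
      · rw [List.append_nil]; exact (consStar_none_mem S M u).2 hu
    | cons a v =>
      obtain ⟨p, hp, hp'⟩ := M.mem_accepts.1 hv
      refine ⟨some p, ?_, ?_⟩
      · rw [Set.mem_union]; exact Or.inl (Set.mem_image_of_mem _ hp)
      · exact (consStar_some_mem S M _ p).2 ⟨u, a, v, rfl, hu, hp'⟩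

/-- Transport an NFA along an equivalence of state types. -/
def equivNFA (e : Q ≃ Q') (M : NFA σ Q) : NFA σ Q' where
  step q' a := e '' M.step (e.symm q') a
  start := e '' M.start
  accept := e '' M.accept

theorem equivNFA_accepts (e : Q ≃ Q') (M : NFA σ Q) :
    (equivNFA e M).accepts = M.accepts := by
  have hstep : ∀ p a, (equivNFA e M).step (e p) a = e '' M.step p a := by
    intro p a
    show e '' M.step (e.symm (e p)) a = e '' M.step p a
    rw [Equiv.symm_apply_apply]
  ext w
  rw [NFA.mem_accepts, NFA.mem_accepts]
  have hstart : (equivNFA e M).start = e '' M.start := rfl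
  have hacc : (equivNFA e M).accept = e '' M.accept := rfl
  rw [hstart, hacc, evalFrom_image e M _ hstep]
  constructor
  · rintro ⟨q, hq, hq'⟩
    rw [Set.mem_image] at hq
    obtain ⟨p, hp, rfl⟩ := hq
    rw [Set.mem_image] at hq'
    obtain ⟨p', hp', hpp'⟩ := hq'
    obtain rfl := e.injective hpp'
    exact ⟨p', hp, hp'⟩
  · rintro ⟨p, hp, hp'⟩
    exact ⟨e p, Set.mem_image_of_mem _ hp, Set.mem_image_of_mem _ hp'⟩

/-- The one-state NFA accepting exactly the empty word. -/
def nilNFA (σ : Type) : NFA σ (Fin 1) where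
  step _ _ := ∅
  start := {0}
  accept := {0}

theorem nilNFA_accepts (σ : Type) : (nilNFA σ).accepts = 1 := by
  ext w
  rw [NFA.mem_accepts, Language.mem_one]
  have hstart : (nilNFA σ).start = {0} := rfl
  rw [hstart]
  cases w with
  | nil => simp [nilNFA]
  | cons a v =>
    rw [evalFrom_cons]
    have : (nilNFA σ).stepSet {0} a = ∅ := by simp [NFA.stepSet, nilNFA]
    rw [this, evalFrom_empty]
    simp

end ChainAux

/-- For every list `ts` of `n` pairs of a subset of `σ` and a star flag, there is an NFA
over `σ` with state type `Fin (n+1)` accepting exactly the chain language `L(ts)`. -/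
theorem chain_nfa_exists {σ : Type} (ts : List (Set σ × Bool)) :
    ∃ M : NFA σ (Fin (ts.length + 1)), M.accepts = chainLang ts := by
  induction ts with
  | nil =>
    exact ⟨ChainAux.nilNFA σ, by rw [ChainAux.nilNFA_accepts]; rfl⟩
  | cons p rest ih =>
    obtain ⟨M, hM⟩ := ih
    obtain ⟨S, b⟩ := p
    have hchain : chainLang ((S, b) :: rest)
        = (if b then KStar.kstar (singleLang S) else singleLang S) * chainLang rest := by
      simp [chainLang]
    cases b with
    | false =>
      refine ⟨ChainAux.equivNFA (finSuccEquiv (rest.length + 1)).symm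
        (ChainAux.consSym S M), ?_⟩
      rw [ChainAux.equivNFA_accepts, ChainAux.consSym_accepts, hM, hchain]
      simp
    | true =>
      refine ⟨ChainAux.equivNFA (finSuccEquiv (rest.length + 1)).symm
        (ChainAux.consStar S M), ?_⟩
      rw [ChainAux.equivNFA_accepts, ChainAux.consStar_accepts, hM, hchain]
      simp
end

section
/- Let σ be a type and ts = [(S₁,b₁),…,(Sₙ,bₙ)] a list of n pairs of a subset of σ and a Boolean star flag. Then there exist a finite type S with card S ≤ n + 3 and a deterministic finite automaton D over the product alphabet σ × Fin (n+1) with state type S such that π(D.accepts) = L(ts). -/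
namespace ChainDFA
open Computability

open Classical in
noncomputable def step {σ : Type} (ts : List (Set σ × Bool)) :
    Option (Fin (ts.length+1)) → σ × Fin (ts.length+1) → Option (Fin (ts.length+1))
  | none, _ => none
  | some i, (a, j) =>
    if h : (i:ℕ) ≤ (j:ℕ) ∧ (j:ℕ) < ts.length ∧
        (∀ k, (i:ℕ) ≤ k → k < (j:ℕ) → (ts.getD k (∅,false)).2 = true) ∧
        a ∈ (ts.getD (j:ℕ) (∅,false)).1 then
      if (ts.getD (j:ℕ) (∅,false)).2 then some j else some ⟨(j:ℕ)+1, by omega⟩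
    else none

def acc {σ : Type} (ts : List (Set σ × Bool)) : Set (Option (Fin (ts.length+1))) :=
  {s | ∃ i : Fin (ts.length+1), s = some i ∧
    ∀ k, (i:ℕ) ≤ k → k < ts.length → (ts.getD k (∅,false)).2 = true}

noncomputable def D {σ : Type} (ts : List (Set σ × Bool)) :
    DFA (σ × Fin (ts.length+1)) (Option (Fin (ts.length+1))) :=
  ⟨step ts, some ⟨0, Nat.succ_pos _⟩, acc ts⟩

variable {σ : Type} (ts : List (Set σ × Bool))

theorem eval_none (w : List (σ × Fin (ts.length+1))) : (D ts).evalFrom none w = none := by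
  induction w with
  | nil => rfl
  | cons a w ih => simpa [DFA.evalFrom, List.foldl_cons, D, step] using ih

theorem none_not_acc : none ∉ acc ts := by
  rintro ⟨i, h, -⟩; cases h

theorem eval_cons (s : Option (Fin (ts.length+1))) (x : σ × Fin (ts.length+1))
    (w : List (σ × Fin (ts.length+1))) :
    (D ts).evalFrom s (x :: w) = (D ts).evalFrom ((D ts).step s x) w := rfl

open Classical in
theorem step_some (i j : ℕ) (hi : i < ts.length+1) (hj : j < ts.length+1) (a : σ) :
    (D ts).step (some ⟨i, hi⟩) (a, ⟨j, hj⟩) =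
      if h : i ≤ j ∧ j < ts.length ∧
          (∀ k, i ≤ k → k < j → (ts.getD k (∅,false)).2 = true) ∧
          a ∈ (ts.getD j (∅,false)).1 then
        (if (ts.getD j (∅,false)).2 then some ⟨j, hj⟩ else some ⟨j+1, by omega⟩)
      else none := rfl

theorem mem_single (a : σ) (S : Set σ) (h : a ∈ S) : [a] ∈ singleLang S := ⟨a, h, rfl⟩

theorem star_single {S : Set σ} {v : List σ} :
    v ∈ (singleLang S)∗ ↔ ∀ a ∈ v, a ∈ S := by
  constructor
  · rw [Language.mem_kstar]
    rintro ⟨L, rfl, hL⟩ a ha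
    simp only [List.mem_flatten] at ha
    obtain ⟨y, hy, hay⟩ := ha
    obtain ⟨b, hb, rfl⟩ := hL y hy
    rw [List.mem_singleton] at hay
    exact hay ▸ hb
  · intro h
    rw [Language.mem_kstar]
    refine ⟨v.map (fun a => [a]), by clear h; induction v with | nil => rfl | cons a v ih => simpa using ih, ?_⟩
    intro y hy
    simp only [List.mem_map] at hy
    obtain ⟨a, ha, rfl⟩ := hy
    exact mem_single a S (h a ha)

theorem chain_cons (p : Set σ × Bool) (l : List (Set σ × Bool)) :
    chainLang (p :: l) =
      (if p.2 then (singleLang p.1)∗ else singleLang p.1) * chainLang l := by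
  simp [chainLang]

theorem nil_mem_chain : ∀ l : List (Set σ × Bool), (∀ p ∈ l, p.2 = true) → [] ∈ chainLang l := by
  intro l
  induction l with
  | nil => intro _; exact Language.nil_mem_one
  | cons p l ih =>
    intro h
    rw [chain_cons, if_pos (h p List.mem_cons_self)]
    exact Language.append_mem_mul (Language.nil_mem_kstar _)
      (ih fun q hq => h q (List.mem_cons_of_mem _ hq))

theorem flags_drop {i : ℕ}
    (h : ∀ k, i ≤ k → k < ts.length → (ts.getD k (∅,false)).2 = true) :
    ∀ p ∈ ts.drop i, p.2 = true := by
  intro p hp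
  obtain ⟨m, hm, rfl⟩ := List.mem_iff_getElem.1 hp
  rw [List.getElem_drop]
  have hlt : i + m < ts.length := by
    have := hm; rw [List.length_drop] at this; omega
  rw [← List.getD_eq_getElem ts (∅,false) hlt]
  exact h (i + m) (Nat.le_add_right _ _) hlt

theorem skip : ∀ (d i : ℕ), i + d ≤ ts.length →
    (∀ k, i ≤ k → k < i + d → (ts.getD k (∅,false)).2 = true) →
    ∀ u ∈ chainLang (ts.drop (i + d)), u ∈ chainLang (ts.drop i) := by
  intro d
  induction d with
  | zero => intro i _ _ u hu; exact hu
  | succ d ih =>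
    intro i hle hfl u hu
    have hi : i < ts.length := by omega
    rw [List.drop_eq_getElem_cons hi, chain_cons]
    have hflag : ts[i].2 = true := by
      have := hfl i le_rfl (by omega)
      rwa [List.getD_eq_getElem ts (∅,false) hi] at this
    rw [if_pos hflag]
    have hu' : u ∈ chainLang (ts.drop (i + 1)) := by
      apply ih (i+1) (by omega) (fun k hk1 hk2 => hfl k (by omega) (by omega))
      have h' : i + 1 + d = i + (d + 1) := by omega
      rwa [h']
    exact Language.append_mem_mul (Language.nil_mem_kstar _) hu'

theorem consume (j : ℕ) (hj : j < ts.length) (a : σ) (ha : a ∈ ts[j].1) (u : List σ)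
    (h1 : ts[j].2 = true → u ∈ chainLang (ts.drop j))
    (h2 : ts[j].2 = false → u ∈ chainLang (ts.drop (j+1))) :
    a :: u ∈ chainLang (ts.drop j) := by
  rw [List.drop_eq_getElem_cons hj, chain_cons]
  by_cases hb : ts[j].2 = true
  · rw [if_pos hb]
    have hu := h1 hb
    rw [List.drop_eq_getElem_cons hj, chain_cons, if_pos hb] at hu
    obtain ⟨v, hv, r, hr, hvr⟩ := Language.mem_mul.1 hu
    have hav : a :: v ∈ (singleLang ts[j].1)∗ := by
      rw [star_single] at hv ⊢
      intro b hb'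
      rcases List.mem_cons.1 hb' with h | h
      · exact h ▸ ha
      · exact hv b h
    have := Language.append_mem_mul hav hr
    rwa [List.cons_append, hvr] at this
  · rw [if_neg hb]
    exact Language.append_mem_mul (mem_single a _ ha)
      (h2 (by simpa using hb))

theorem sound : ∀ (w : List (σ × Fin (ts.length+1))) (i : ℕ) (hi : i ≤ ts.length),
    (D ts).evalFrom (some ⟨i, by omega⟩) w ∈ acc ts → w.map Prod.fst ∈ chainLang (ts.drop i) := by
  intro w
  induction w with
  | nil =>
    intro i hi h
    obtain ⟨i', heq, hfl⟩ := h
    have hii : (⟨i, by omega⟩ : Fin (ts.length+1)) = i' := by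
      simpa [DFA.evalFrom] using heq
    subst hii
    exact nil_mem_chain _ (flags_drop ts hfl)
  | cons x w ih =>
    obtain ⟨a, j⟩ := x
    obtain ⟨j, hjlt⟩ := j
    intro i hi h
    rw [eval_cons, step_some] at h
    by_cases hc : i ≤ j ∧ j < ts.length ∧
        (∀ k, i ≤ k → k < j → (ts.getD k (∅,false)).2 = true) ∧
        a ∈ (ts.getD j (∅,false)).1
    · obtain ⟨h1, h2, h3, h4⟩ := hc
      rw [dif_pos ⟨h1, h2, h3, h4⟩] at h
      have ha : a ∈ ts[j].1 := by
        rwa [List.getD_eq_getElem ts (∅,false) h2] at h4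
      have hgd : (ts.getD j (∅,false)).2 = ts[j].2 := by
        rw [List.getD_eq_getElem ts (∅,false) h2]
      have key : (a :: w.map Prod.fst) ∈ chainLang (ts.drop j) := by
        apply consume ts j h2 a ha
        · intro hb
          rw [if_pos (hgd.trans hb)] at h
          exact ih j (by omega) h
        · intro hb
          rw [if_neg (show ¬ (ts.getD j (∅,false)).2 = true from by
            rw [hgd, hb]; exact Bool.false_ne_true)] at h
          exact ih (j+1) (by omega) h
      show (a :: w.map Prod.fst) ∈ chainLang (ts.drop i)
      have hij : i + (j - i) = j := by omega
      apply skip ts (j - i) i (by omega) (fun k hk1 hk2 => h3 k hk1 (by omega))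
      rwa [hij]
    · rw [dif_neg hc, eval_none] at h
      exact absurd h (none_not_acc ts)

theorem up (i : ℕ) (hi : i < ts.length) (hf : (ts.getD i (∅,false)).2 = true) :
    ∀ (w : List (σ × Fin (ts.length+1))),
    (D ts).evalFrom (some ⟨i+1, by omega⟩) w ∈ acc ts →
    (D ts).evalFrom (some ⟨i, by omega⟩) w ∈ acc ts := by
  intro w h
  cases w with
  | nil =>
    obtain ⟨i', heq, hfl⟩ := h
    have hii : (⟨i+1, by omega⟩ : Fin (ts.length+1)) = i' := by
      simpa [DFA.evalFrom] using heq
    subst hii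
    refine ⟨⟨i, by omega⟩, rfl, fun k hk1 hk2 => ?_⟩
    rcases Nat.eq_or_lt_of_le hk1 with h' | h'
    · exact h' ▸ hf
    · exact hfl k h' hk2
  | cons x w =>
    obtain ⟨a, j⟩ := x
    obtain ⟨j, hjlt⟩ := j
    rw [eval_cons, step_some] at h ⊢
    by_cases hc : i+1 ≤ j ∧ j < ts.length ∧
        (∀ k, i+1 ≤ k → k < j → (ts.getD k (∅,false)).2 = true) ∧
        a ∈ (ts.getD j (∅,false)).1
    · obtain ⟨h1, h2, h3, h4⟩ := hc
      rw [dif_pos ⟨h1, h2, h3, h4⟩] at h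
      have hc' : i ≤ j ∧ j < ts.length ∧
          (∀ k, i ≤ k → k < j → (ts.getD k (∅,false)).2 = true) ∧
          a ∈ (ts.getD j (∅,false)).1 := by
        refine ⟨by omega, h2, fun k hk1 hk2 => ?_, h4⟩
        rcases Nat.eq_or_lt_of_le hk1 with h' | h'
        · exact h' ▸ hf
        · exact h3 k h' hk2
      rw [dif_pos hc']
      exact h
    · rw [dif_neg hc, eval_none] at h
      exact absurd h (none_not_acc ts)

theorem stay (i : ℕ) (hi : i < ts.length) (hf : (ts.getD i (∅,false)).2 = true) :
    ∀ (v : List σ), (∀ a ∈ v, a ∈ (ts.getD i (∅,false)).1) →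
    (D ts).evalFrom (some ⟨i, by omega⟩)
      (v.map (fun a => (a, (⟨i, by omega⟩ : Fin (ts.length+1))))) = some ⟨i, by omega⟩ := by
  intro v
  induction v with
  | nil => intro _; rfl
  | cons a v ih =>
    intro hv
    rw [List.map_cons, eval_cons, step_some]
    rw [dif_pos ⟨le_rfl, hi,
      fun k hk1 hk2 => absurd (lt_of_le_of_lt hk1 hk2) (lt_irrefl _),
      hv a List.mem_cons_self⟩]
    rw [if_pos hf]
    exact ih (fun b hb => hv b (List.mem_cons_of_mem _ hb))

theorem complete : ∀ (l : List (Set σ × Bool)) (i : ℕ) (hi : i ≤ ts.length)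
    (hd : ts.drop i = l) (u : List σ), u ∈ chainLang l →
    ∃ w : List (σ × Fin (ts.length+1)), w.map Prod.fst = u ∧
      (D ts).evalFrom (some ⟨i, by omega⟩) w ∈ acc ts := by
  intro l
  induction l with
  | nil =>
    intro i hi hd u hu
    have hu' : u = [] := Language.mem_one u |>.1 (by simpa [chainLang] using hu)
    subst hu'
    have hni : ts.length ≤ i := by
      have := List.drop_eq_nil_iff.1 hd; omega
    exact ⟨[], rfl, ⟨⟨i, by omega⟩, rfl, fun k hk1 hk2 => by
      have hvi : ((⟨i, by omega⟩ : Fin (ts.length+1)) : ℕ) = i := rfl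
      omega⟩⟩
  | cons p l ih =>
    obtain ⟨S, b⟩ := p
    intro i hi hd u hu
    have hilt : i < ts.length := by
      by_contra hcon
      rw [List.drop_eq_nil_iff.2 (by omega)] at hd
      cases hd
    have hcons := (List.drop_eq_getElem_cons hilt).symm.trans hd
    injection hcons with hget hdrop
    have hgd : ts.getD i (∅,false) = (S, b) := by
      rw [List.getD_eq_getElem ts (∅,false) hilt, hget]
    rw [chain_cons] at hu
    obtain ⟨v, hv, r, hr, hvr⟩ := Language.mem_mul.1 hu
    obtain ⟨w', hw'map, hw'acc⟩ := ih (i+1) (by omega) hdrop r hr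
    cases b with
    | false =>
      rw [if_neg (by simp)] at hv
      obtain ⟨a, haS, rfl⟩ := hv
      refine ⟨(a, ⟨i, by omega⟩) :: w', by simp [hw'map, ← hvr], ?_⟩
      rw [eval_cons, step_some]
      rw [dif_pos ⟨le_rfl, hilt,
        fun k hk1 hk2 => absurd (lt_of_le_of_lt hk1 hk2) (lt_irrefl _),
        by rw [hgd]; exact haS⟩]
      rw [if_neg (show ¬ (ts.getD i (∅,false)).2 = true from by
        rw [hgd]; exact Bool.false_ne_true)]
      exact hw'acc
    | true =>
      rw [if_pos rfl] at hv
      have hvS : ∀ a ∈ v, a ∈ (ts.getD i (∅,false)).1 := by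
        rw [hgd]
        exact star_single.1 hv
      refine ⟨v.map (fun a => (a, (⟨i, by omega⟩ : Fin (ts.length+1)))) ++ w', ?_, ?_⟩
      · rw [List.map_append, List.map_map, hw'map, ← hvr]
        congr 1
        show List.map id v = v
        exact List.map_id v
      · rw [DFA.evalFrom_of_append, stay ts i hilt (by rw [hgd]) v hvS]
        exact up ts i hilt (by rw [hgd]) w' hw'acc

end ChainDFA

/-- For every list `ts` of `n` pairs, there exist a finite type `S` with `card S ≤ n + 3`
and a DFA `D` over the product alphabet `σ × Fin (n+1)` with state type `S` such that
`π(D.accepts) = L(ts)`. -/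
theorem chain_dfa_free_inputs {σ : Type} (ts : List (Set σ × Bool)) :
    ∃ (S : Type) (_ : Fintype S), Fintype.card S ≤ ts.length + 3 ∧
      ∃ D : DFA (σ × Fin (ts.length + 1)) S, projLang D.accepts = chainLang ts := by
  refine ⟨Option (Fin (ts.length + 1)), inferInstance, ?_, ChainDFA.D ts, ?_⟩
  · rw [Fintype.card_option, Fintype.card_fin]
    omega
  · ext u
    constructor
    · rintro ⟨w, hw, rfl⟩
      have hw' : (ChainDFA.D ts).evalFrom (some ⟨0, Nat.succ_pos _⟩) w ∈ ChainDFA.acc ts := hw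
      simpa using ChainDFA.sound ts w 0 (Nat.zero_le _) hw'
    · intro hu
      obtain ⟨w, hmap, hacc⟩ := ChainDFA.complete ts ts 0 (Nat.zero_le _) List.drop_zero u hu
      refine ⟨w, ?_, hmap⟩
      exact hacc
end

section
/- Let σ be a type and ts = [(S₁,b₁),…,(Sₙ,bₙ)] a list of n pairs of a subset of σ and a Boolean star flag, and suppose every maximal run of consecutive entries of ts whose flag is true has length at most m. Then there exist a finite type S with card S ≤ n + 3 and a deterministic finite automaton D over the product alphabet σ × Fin (m+2) with state type S such that π(D.accepts) = L(ts). -/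
namespace ChainDFAProof

variable {σ : Type}

/-- The star flag of entry `k`. -/
abbrev starAt (ts : List (Set σ × Bool)) (k : ℕ) : Prop :=
  (ts.getD k ((∅ : Set σ), false)).2 = true

/-- The symbol set of entry `k`. -/
def setAt (ts : List (Set σ × Bool)) (k : ℕ) : Set σ :=
  (ts.getD k ((∅ : Set σ), false)).1

lemma flatten_map_singleton {α : Type} (w : List α) :
    (w.map fun a => [a]).flatten = w := by
  induction w with
  | nil => rfl
  | cons a w ih =>
    simp only [List.map_cons, List.flatten_cons, List.singleton_append]
    exact congrArg (a :: ·) ih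

lemma mem_kstar_single {S : Set σ} {w : List σ} :
    w ∈ KStar.kstar (singleLang S) ↔ ∀ a ∈ w, a ∈ S := by
  rw [Language.mem_kstar]
  constructor
  · rintro ⟨L, rfl, hL⟩ a ha
    rw [List.mem_flatten] at ha
    obtain ⟨l, hl, hal⟩ := ha
    obtain ⟨b, hb, rfl⟩ := hL l hl
    simp only [List.mem_singleton] at hal
    exact hal ▸ hb
  · intro h
    refine ⟨w.map fun a => [a], (flatten_map_singleton w).symm, ?_⟩
    · rintro y hy
      simp only [List.mem_map] at hy
      obtain ⟨a, ha, rfl⟩ := hy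
      exact ⟨a, h a ha, rfl⟩

lemma cons_mem_kstar_single {S : Set σ} {a : σ} {w : List σ}
    (ha : a ∈ S) (hw : w ∈ KStar.kstar (singleLang S)) :
    (a :: w) ∈ KStar.kstar (singleLang S) := by
  rw [mem_kstar_single] at hw ⊢
  intro b hb
  rcases List.mem_cons.1 hb with rfl | hb
  · exact ha
  · exact hw b hb

lemma nil_mem_singleLang_kstar (S : Set σ) : ([] : List σ) ∈ KStar.kstar (singleLang S) :=
  mem_kstar_single.2 (by simp)

lemma nil_not_mem_singleLang (S : Set σ) : ([] : List σ) ∉ singleLang S := by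
  rintro ⟨a, _, h⟩
  exact absurd h (by simp)

/-- The language of the factors with index `≥ i` (0-based). -/
def tailLang (ts : List (Set σ × Bool)) (i : ℕ) : Language σ := chainLang (ts.drop i)

/-- `1` if `i = 0` or entry `i-1` is unstarred, otherwise the star of entry `i-1`:
the extra letters that may still be consumed after having reached position `i`. -/
def headStar (ts : List (Set σ × Bool)) (i : ℕ) : Language σ :=
  if 1 ≤ i ∧ starAt ts (i - 1) then KStar.kstar (singleLang (setAt ts (i - 1))) else 1

def auxLang (ts : List (Set σ × Bool)) (i : ℕ) : Language σ :=
  headStar ts i * tailLang ts i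

lemma nil_mem_headStar (ts : List (Set σ × Bool)) (i : ℕ) : [] ∈ headStar ts i := by
  unfold headStar
  split
  · exact nil_mem_singleLang_kstar _
  · exact (Language.mem_one _).2 rfl

lemma tail_ge (ts : List (Set σ × Bool)) {i : ℕ} (h : ts.length ≤ i) :
    tailLang ts i = 1 := by
  unfold tailLang chainLang
  rw [List.drop_eq_nil_of_le h]
  rfl

lemma tail_succ (ts : List (Set σ × Bool)) {i : ℕ} (h : i < ts.length) :
    tailLang ts i =
      (if starAt ts i then KStar.kstar (singleLang (setAt ts i)) else singleLang (setAt ts i)) *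
        tailLang ts (i + 1) := by
  unfold tailLang chainLang
  rw [List.drop_eq_getElem_cons h, List.map_cons, List.prod_cons]
  have hg : ts.getD i ((∅ : Set σ), false) = ts[i] := List.getD_eq_getElem _ _ h
  simp only [setAt, starAt, hg]

lemma nil_tail (ts : List (Set σ × Bool)) :
    ∀ i, ([] ∈ tailLang ts i ↔ ∀ k, i ≤ k → k < ts.length → starAt ts k) := by
  have H : ∀ fuel i, ts.length - i ≤ fuel →
      ([] ∈ tailLang ts i ↔ ∀ k, i ≤ k → k < ts.length → starAt ts k) := by
    intro fuel
    induction fuel with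
    | zero =>
      intro i hi
      have h : ts.length ≤ i := by omega
      rw [tail_ge ts h]
      simp only [Language.mem_one]
      constructor
      · intro _ k hk1 hk2; omega
      · intro _; trivial
    | succ fuel ih =>
      intro i hi
      rcases le_or_gt ts.length i with h | h
      · rw [tail_ge ts h]
        simp only [Language.mem_one]
        constructor
        · intro _ k hk1 hk2; omega
        · intro _; trivial
      · rw [tail_succ ts h, Language.mem_mul]
        have ihi := ih (i + 1) (by omega)
        constructor
        · rintro ⟨u, hu, v, hv, huv⟩
          have hu0 : u = [] := by
            cases u with
            | nil => rfl
            | cons a u => exact absurd huv (by simp)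
          have hv0 : v = [] := by
            cases v with
            | nil => rfl
            | cons a v => subst hu0; exact absurd huv (by simp)
          subst hu0; subst hv0
          have hstar : starAt ts i := by
            by_contra hs
            rw [if_neg hs] at hu
            exact nil_not_mem_singleLang _ hu
          intro k hk1 hk2
          rcases Nat.eq_or_lt_of_le hk1 with rfl | hk
          · exact hstar
          · exact (ihi.1 hv) k (by omega) hk2
        · intro hall
          have hstar : starAt ts i := hall i le_rfl h
          refine ⟨[], ?_, [], ?_, rfl⟩
          · rw [if_pos hstar]; exact nil_mem_singleLang_kstar _
          · exact ihi.2 fun k hk1 hk2 => hall k (by omega) hk2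
  intro i
  exact H (ts.length - i) i le_rfl

/-- Decomposing a nonempty word in the tail language: there is a first factor `j`
(1-based; entry `j-1`) consuming the first letter, all entries strictly between being starred. -/
lemma decompose (ts : List (Set σ × Bool)) :
    ∀ fuel i a x, ts.length - i ≤ fuel → (a :: x) ∈ tailLang ts i →
      ∃ j, i < j ∧ j ≤ ts.length ∧ (∀ k, i ≤ k → k + 1 < j → starAt ts k) ∧
        a ∈ setAt ts (j - 1) ∧ x ∈ auxLang ts j := by
  intro fuel
  induction fuel with
  | zero =>
    intro i a x hfi hx
    have h : ts.length ≤ i := by omega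
    rw [tail_ge ts h, Language.mem_one] at hx
    exact absurd hx (by simp)
  | succ fuel ih =>
    intro i a x hfi hx
    rcases le_or_gt ts.length i with h | h
    · rw [tail_ge ts h, Language.mem_one] at hx
      exact absurd hx (by simp)
    · rw [tail_succ ts h, Language.mem_mul] at hx
      obtain ⟨u, hu, v, hv, huv⟩ := hx
      by_cases hb : starAt ts i
      · rw [if_pos hb] at hu
        cases u with
        | nil =>
          simp only [List.nil_append] at huv
          subst huv
          obtain ⟨j, hj1, hj2, hj3, hj4, hj5⟩ := ih (i + 1) a x (by omega) hv
          exact ⟨j, by omega, hj2, fun k hk1 hk2 => by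
            rcases Nat.eq_or_lt_of_le hk1 with rfl | hk
            · exact hb
            · exact hj3 k (by omega) hk2, hj4, hj5⟩
        | cons b u =>
          simp only [List.cons_append, List.cons.injEq] at huv
          obtain ⟨rfl, rfl⟩ := huv
          have hmem := mem_kstar_single.1 hu
          refine ⟨i + 1, by omega, by omega, fun k hk1 hk2 => by omega, ?_, ?_⟩
          · simpa using hmem _ List.mem_cons_self
          · rw [auxLang, Language.mem_mul]
            refine ⟨u, ?_, v, hv, rfl⟩
            rw [headStar, if_pos ⟨by omega, by simpa using hb⟩]
            simp only [Nat.add_sub_cancel]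
            exact mem_kstar_single.2 fun c hc => hmem c (by simp [hc])
      · rw [if_neg hb] at hu
        obtain ⟨b, hbS, rfl⟩ := hu
        simp only [List.cons_append, List.cons.injEq, List.nil_append] at huv
        obtain ⟨rfl, rfl⟩ := huv
        refine ⟨i + 1, by omega, by omega, fun k hk1 hk2 => by omega, by simpa using hbS, ?_⟩
        rw [auxLang, Language.mem_mul]
        refine ⟨[], ?_, v, hv, rfl⟩
        rw [headStar, if_neg (by simp [hb])]
        exact (Language.mem_one _).2 rfl

/-- Composing: jumping over starred entries `i, …, j-2` and consuming `a` in entry `j-1`. -/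
lemma compose (ts : List (Set σ × Bool)) :
    ∀ fuel i j a x, j - i ≤ fuel → i < j → j ≤ ts.length →
      (∀ k, i ≤ k → k + 1 < j → starAt ts k) → a ∈ setAt ts (j - 1) →
      x ∈ auxLang ts j → (a :: x) ∈ tailLang ts i := by
  intro fuel
  induction fuel with
  | zero => intro i j a x h1 h2; omega
  | succ fuel ih =>
    intro i j a x hfi hij hjn hskip ha hx
    have hi : i < ts.length := by omega
    rw [tail_succ ts hi, Language.mem_mul]
    rcases Nat.eq_or_lt_of_le (Nat.succ_le_of_lt hij) with heq | hlt
    · -- j = i + 1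
      have hji : j - 1 = i := by omega
      rw [hji] at ha
      rw [auxLang, Language.mem_mul] at hx
      obtain ⟨u, hu, v, hv, huv⟩ := hx
      by_cases hb : starAt ts i
      · rw [if_pos hb]
        refine ⟨a :: u, ?_, v, ?_, by simp [huv]⟩
        · apply cons_mem_kstar_single ha
          rw [headStar, if_pos ⟨by omega, by rw [← heq]; simpa [hji] using hb⟩] at hu
          have : j - 1 = i := hji
          rwa [this] at hu
        · have : j = i + 1 := heq.symm
          rwa [this] at hv
      · rw [if_neg hb]
        have hu0 : u = [] := by
          rw [headStar, if_neg (by rw [← heq]; simp [hji, hb])] at hu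
          exact (Language.mem_one _).1 hu
        subst hu0
        simp only [List.nil_append] at huv
        subst huv
        refine ⟨[a], ⟨a, ha, rfl⟩, v, ?_, rfl⟩
        have : j = i + 1 := heq.symm
        rwa [this] at hv
    · -- j > i + 1 : entry i is starred, skip it
      have hb : starAt ts i := hskip i le_rfl (by omega)
      rw [if_pos hb]
      refine ⟨[], nil_mem_singleLang_kstar _, a :: x, ?_, rfl⟩
      exact ih (i + 1) j a x (by omega) (by omega) hjn
        (fun k hk1 hk2 => hskip k (by omega) hk2) ha hx

/-! ### The DFA -/

/-- Validity of a transition: from position `i`, reading symbol `a` with jump `c`,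
landing at position `i + c` where `a` is consumed by entry `i + c - 1` and all
skipped entries are starred (for `c = 0` the current entry must be starred). -/
def valid (ts : List (Set σ × Bool)) (i : ℕ) (a : σ) (c : ℕ) : Prop :=
  1 ≤ i + c ∧ i + c ≤ ts.length ∧ a ∈ setAt ts (i + c - 1) ∧
    (if c = 0 then starAt ts (i + c - 1)
     else ∀ k, i ≤ k → k + 1 < i + c → starAt ts k)

open Classical in
noncomputable def chainStep (ts : List (Set σ × Bool)) (m : ℕ) :
    Option (Fin (ts.length + 1)) → σ × Fin (m + 2) → Option (Fin (ts.length + 1))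
  | none, _ => none
  | some q, (a, c) =>
      if h : valid ts q.1 a c.1 then some ⟨q.1 + c.1, by have := h.2.1; omega⟩ else none

noncomputable def chainDFA (ts : List (Set σ × Bool)) (m : ℕ) :
    DFA (σ × Fin (m + 2)) (Option (Fin (ts.length + 1))) where
  step := chainStep ts m
  start := some ⟨0, by omega⟩
  accept := { s | ∃ q : Fin (ts.length + 1), s = some q ∧
      ∀ k, q.1 ≤ k → k < ts.length → starAt ts k }

lemma evalFrom_none (ts : List (Set σ × Bool)) (m : ℕ) (w : List (σ × Fin (m + 2))) :
    (chainDFA ts m).evalFrom none w = none := by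
  induction w with
  | nil => rfl
  | cons a w ih =>
    have hstep : (chainDFA ts m).step none a = none := by
      obtain ⟨a1, a2⟩ := a
      rfl
    show (chainDFA ts m).evalFrom ((chainDFA ts m).step none a) w = none
    rw [hstep]
    exact ih

lemma none_not_accept (ts : List (Set σ × Bool)) (m : ℕ) :
    none ∉ (chainDFA ts m).accept := by
  rintro ⟨q, h, -⟩
  exact absurd h (by simp)

/-- Soundness: every word accepted from position `q` projects into `auxLang ts q`. -/
lemma soundAux (ts : List (Set σ × Bool)) (m : ℕ) :
    ∀ (w : List (σ × Fin (m + 2))) (q : Fin (ts.length + 1)),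
      (chainDFA ts m).evalFrom (some q) w ∈ (chainDFA ts m).accept →
      (w.map Prod.fst) ∈ auxLang ts q.1 := by
  intro w
  induction w with
  | nil =>
    intro q hacc
    obtain ⟨q', hq', hall⟩ := hacc
    have : q = q' := Option.some_injective _ hq'
    subst this
    rw [auxLang, Language.mem_mul]
    exact ⟨[], nil_mem_headStar ts q.1, [], (nil_tail ts q.1).2 hall, rfl⟩
  | cons ac w ih =>
    intro q hacc
    obtain ⟨a, c⟩ := ac
    have hev : (chainDFA ts m).evalFrom (some q) ((a, c) :: w) =
        (chainDFA ts m).evalFrom ((chainDFA ts m).step (some q) (a, c)) w := rfl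
    rw [hev] at hacc
    by_cases h : valid ts q.1 a c.1
    · have hstep : (chainDFA ts m).step (some q) (a, c) =
          some ⟨q.1 + c.1, by have := h.2.1; omega⟩ := by
        show chainStep ts m (some q) (a, c) = _
        rw [chainStep, dif_pos h]
      rw [hstep] at hacc
      have hIH := ih ⟨q.1 + c.1, by have := h.2.1; omega⟩ hacc
      simp only at hIH
      obtain ⟨h1, h2, h3, h4⟩ := h
      by_cases hc : c.1 = 0
      · -- stay: consume another letter of the current star
        rw [hc, Nat.add_zero] at hIH h1 h3 h4
        rw [if_pos rfl] at h4
        simp only [List.map_cons]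
        rw [auxLang, Language.mem_mul] at hIH ⊢
        obtain ⟨u, hu, v, hv, huv⟩ := hIH
        have hcond : 1 ≤ q.1 ∧ starAt ts (q.1 - 1) := ⟨h1, h4⟩
        refine ⟨a :: u, ?_, v, hv, by simp [huv]⟩
        rw [headStar, if_pos hcond] at hu ⊢
        exact cons_mem_kstar_single h3 hu
      · -- jump
        rw [if_neg hc] at h4
        have htail : (a :: w.map Prod.fst) ∈ tailLang ts q.1 :=
          compose ts (q.1 + c.1 - q.1) q.1 (q.1 + c.1) a (w.map Prod.fst)
            le_rfl (by omega) h2 h4 h3 hIH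
        rw [auxLang, Language.mem_mul]
        exact ⟨[], nil_mem_headStar ts q.1, a :: w.map Prod.fst, htail, rfl⟩
    · have hstep : (chainDFA ts m).step (some q) (a, c) = none := by
        show chainStep ts m (some q) (a, c) = _
        rw [chainStep, dif_neg h]
      rw [hstep, evalFrom_none] at hacc
      exact absurd hacc (none_not_accept ts m)

/-- Completeness: every word of `auxLang ts q` has an annotation accepted from `q`.
Uses `hruns` to bound the jumps by `m + 1`. -/
lemma completeAux (ts : List (Set σ × Bool)) (m : ℕ)
    (hruns : ∀ i, i + m < ts.length →
      ∃ j, i ≤ j ∧ j ≤ i + m ∧ (ts.getD j ((∅ : Set σ), false)).2 = false) :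
    ∀ (N : ℕ) (x : List σ), x.length ≤ N → ∀ (q : Fin (ts.length + 1)), x ∈ auxLang ts q.1 →
      ∃ w : List (σ × Fin (m + 2)), w.map Prod.fst = x ∧
        (chainDFA ts m).evalFrom (some q) w ∈ (chainDFA ts m).accept := by
  intro N
  induction N with
  | zero =>
    intro x hx q hmem
    have hx0 : x = [] := List.length_eq_zero_iff.1 (by omega)
    subst hx0
    rw [auxLang, Language.mem_mul] at hmem
    obtain ⟨u, hu, v, hv, huv⟩ := hmem
    have hv0 : v = [] := by
      cases u <;> cases v <;> simp_all
    subst hv0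
    exact ⟨[], rfl, ⟨q, rfl, (nil_tail ts q.1).1 hv⟩⟩
  | succ N ih =>
    intro x hx q hmem
    cases x with
    | nil => exact ih [] (by simp) q hmem
    | cons a x' =>
      rw [auxLang, Language.mem_mul] at hmem
      obtain ⟨u, hu, v, hv, huv⟩ := hmem
      cases u with
      | cons b u' =>
        -- consume a letter of the current star : jump 0
        simp only [List.cons_append, List.cons.injEq] at huv
        obtain ⟨rfl, rfl⟩ := huv
        have hcond : 1 ≤ q.1 ∧ starAt ts (q.1 - 1) := by
          by_contra hcnd
          rw [headStar, if_neg hcnd, Language.mem_one] at hu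
          exact absurd hu (by simp)
        rw [headStar, if_pos hcond] at hu
        have hmemu := mem_kstar_single.1 hu
        have ha := hmemu _ List.mem_cons_self
        have hx' : (u' ++ v) ∈ auxLang ts q.1 := by
          rw [auxLang, Language.mem_mul]
          refine ⟨u', ?_, v, hv, rfl⟩
          rw [headStar, if_pos hcond]
          exact mem_kstar_single.2 fun c hc => hmemu c (by simp [hc])
        obtain ⟨w', hw1, hw2⟩ := ih (u' ++ v) (by simp only [List.length_cons] at hx; omega) q hx'
        have hval : valid ts q.1 b (0 : ℕ) := by
          refine ⟨by omega, by have := q.isLt; omega, by simpa using ha, ?_⟩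
          rw [if_pos rfl]
          simpa using hcond.2
        refine ⟨(b, ⟨0, by omega⟩) :: w', by simp [hw1], ?_⟩
        have hstep : (chainDFA ts m).step (some q) (b, ⟨0, by omega⟩) = some q := by
          show chainStep ts m (some q) (b, ⟨0, by omega⟩) = some q
          rw [chainStep, dif_pos hval]
          exact congrArg some (Fin.ext (by simp))
        show (chainDFA ts m).evalFrom ((chainDFA ts m).step (some q) (b, ⟨0, by omega⟩)) w' ∈ _
        rw [hstep]
        exact hw2
      | nil =>
        -- jump to the factor consuming a
        simp only [List.nil_append] at huv
        subst huv
        obtain ⟨j, hj1, hj2, hj3, hj4, hj5⟩ :=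
          decompose ts (ts.length - q.1) q.1 a x' le_rfl hv
        set c : ℕ := j - q.1 with hc
        have hqc : q.1 + c = j := by omega
        -- bound the jump using hruns
        have hcm : c < m + 2 := by
          by_contra hcm
          push_neg at hcm
          have hlt : q.1 + m < ts.length := by omega
          obtain ⟨j₀, hj01, hj02, hj03⟩ := hruns q.1 hlt
          have : starAt ts j₀ := hj3 j₀ hj01 (by omega)
          rw [starAt, hj03] at this
          exact Bool.noConfusion this
        obtain ⟨w', hw1, hw2⟩ := ih x' (by simp_all) ⟨j, by omega⟩ hj5
        have hval : valid ts q.1 a c := by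
          refine ⟨by omega, by omega, by rwa [hqc], ?_⟩
          rw [if_neg (by omega)]
          intro k hk1 hk2
          exact hj3 k hk1 (by omega)
        refine ⟨(a, ⟨c, hcm⟩) :: w', by simp [hw1], ?_⟩
        have hstep : (chainDFA ts m).step (some q) (a, ⟨c, hcm⟩) =
            some ⟨j, by omega⟩ := by
          show chainStep ts m (some q) (a, ⟨c, hcm⟩) = _
          rw [chainStep, dif_pos hval]
          exact congrArg some (Fin.ext (by simpa using hqc))
        show (chainDFA ts m).evalFrom ((chainDFA ts m).step (some q) (a, ⟨c, hcm⟩)) w' ∈ _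
        rw [hstep]
        exact hw2

lemma auxLang_zero (ts : List (Set σ × Bool)) : auxLang ts 0 = chainLang ts := by
  rw [auxLang, headStar, if_neg (by simp), one_mul, tailLang, List.drop_zero]

end ChainDFAProof

/-- If every maximal run of consecutive starred entries of `ts` has length at most `m`
(equivalently, every window of `m+1` consecutive entries contains an unstarred one), then
there exist a finite type `S` with `card S ≤ n + 3` and a DFA `D` over the product alphabet
`σ × Fin (m+2)` with state type `S` such that `π(D.accepts) = L(ts)`. -/
theorem chain_dfa_bounded_star_runs {σ : Type} (ts : List (Set σ × Bool)) (m : ℕ)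
    (hruns : ∀ i, i + m < ts.length →
      ∃ j, i ≤ j ∧ j ≤ i + m ∧ (ts.getD j ((∅ : Set σ), false)).2 = false) :
    ∃ (S : Type) (_ : Fintype S), Fintype.card S ≤ ts.length + 3 ∧
      ∃ D : DFA (σ × Fin (m + 2)) S, projLang D.accepts = chainLang ts := by
  classical
  refine ⟨Option (Fin (ts.length + 1)), inferInstance, ?_, ChainDFAProof.chainDFA ts m, ?_⟩
  · simp
  · ext x
    constructor
    · rintro ⟨w, hw, rfl⟩
      replace hw := (DFA.mem_accepts _).1 hw
      have := ChainDFAProof.soundAux ts m w ⟨0, by omega⟩ hw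
      rwa [ChainDFAProof.auxLang_zero] at this
    · intro hx
      have hx0 : x ∈ ChainDFAProof.auxLang ts 0 := by
        rwa [ChainDFAProof.auxLang_zero]
      obtain ⟨w, hw1, hw2⟩ :=
        ChainDFAProof.completeAux ts m hruns x.length x le_rfl ⟨0, by omega⟩ hx0
      exact ⟨w, (DFA.mem_accepts _).2 hw2, hw1⟩
end

section
/- Let σ be a type and ts = [(S₁,b₁),…,(Sₙ,bₙ)] a list of n pairs of a subset of σ and a Boolean star flag. Then there exists a nondeterministic finite automaton over σ with state type Fin (n+1) whose accepted language equals the concatenation of the universal language over σ with L(ts), i.e. the set {u ++ v | u : List σ, v ∈ L(ts)} of words ending in a match of the chain. -/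
namespace ChainMonitor

variable {σ : Type}

/-- The language of a single chain entry. -/
def entLang (p : Set σ × Bool) : Language σ :=
  if p.2 then KStar.kstar (singleLang p.1) else singleLang p.1

lemma chainLang_nil : chainLang ([] : List (Set σ × Bool)) = 1 := rfl

lemma chainLang_cons (p : Set σ × Bool) (l : List (Set σ × Bool)) :
    chainLang (p :: l) = entLang p * chainLang l := by
  simp [chainLang, entLang]

lemma chainLang_append (l₁ l₂ : List (Set σ × Bool)) :
    chainLang (l₁ ++ l₂) = chainLang l₁ * chainLang l₂ := by
  simp [chainLang]

lemma chainLang_singleton (p : Set σ × Bool) : chainLang [p] = entLang p := by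
  rw [chainLang_cons, chainLang_nil, mul_one]

lemma single_mem_entLang {p : Set σ × Bool} {a : σ} (ha : a ∈ p.1) : [a] ∈ entLang p := by
  unfold entLang
  split
  · have := Language.join_mem_kstar (l := singleLang p.1) (L := [[a]])
      (by intro y hy; simp at hy; subst hy; exact ⟨a, ha, rfl⟩)
    simpa using this
  · exact ⟨a, ha, rfl⟩

lemma nil_mem_chainLang {l : List (Set σ × Bool)} (h : ∀ p ∈ l, p.2 = true) :
    [] ∈ chainLang l := by
  induction l with
  | nil => exact Language.nil_mem_one
  | cons p l ih =>
    rw [chainLang_cons]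
    have hp : entLang p = KStar.kstar (singleLang p.1) := by
      unfold entLang; rw [h p (List.mem_cons_self)]; simp
    have : ([] : List σ) ++ [] ∈ entLang p * chainLang l := by
      apply Language.append_mem_mul
      · rw [hp]; exact Language.nil_mem_kstar _
      · exact ih fun q hq => h q (List.mem_cons_of_mem _ hq)
    simpa using this

/-- `reach ts i j` : state `j` is reachable from state `i` by ε-moves, i.e. all entries
in `[i, j)` are starred. -/
def reach (ts : List (Set σ × Bool)) (i j : ℕ) : Prop :=
  i ≤ j ∧ ∀ k, i ≤ k → k < j → ∃ h : k < ts.length, (ts[k]'h).2 = true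

lemma reach_refl (ts : List (Set σ × Bool)) (i : ℕ) : reach ts i i :=
  ⟨le_refl _, fun k h1 h2 => absurd h2 (by omega)⟩

lemma reach_trans {ts : List (Set σ × Bool)} {i j l : ℕ} (h1 : reach ts i j)
    (h2 : reach ts j l) : reach ts i l := by
  refine ⟨le_trans h1.1 h2.1, fun k hk1 hk2 => ?_⟩
  by_cases hkj : k < j
  · exact h1.2 k hk1 hkj
  · exact h2.2 k (by omega) hk2

lemma reach_succ {ts : List (Set σ × Bool)} {i : ℕ} (h : i < ts.length)
    (hstar : (ts[i]'h).2 = true) : reach ts i (i + 1) := by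
  refine ⟨by omega, fun k hk1 hk2 => ?_⟩
  have : k = i := by omega
  subst this
  exact ⟨h, hstar⟩

/-- ε-extension of a partial match. -/
lemma mem_take_of_reach {ts : List (Set σ × Bool)} {i j : ℕ} (hr : reach ts i j)
    {v : List σ} (hv : v ∈ chainLang (ts.take i)) : v ∈ chainLang (ts.take j) := by
  have hij : i ≤ j := hr.1
  have : ts.take j = ts.take i ++ (ts.drop i).take (j - i) := by
    rw [← List.take_add]
    congr 1
    omega
  rw [this, chainLang_append]
  have hnil : [] ∈ chainLang ((ts.drop i).take (j - i)) := by
    apply nil_mem_chainLang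
    intro p hp
    rw [List.mem_iff_getElem] at hp
    obtain ⟨k, hk, hpk⟩ := hp
    have hk2 : k < j - i ∧ k < ts.length - i := by
      have := hk
      simp only [List.length_take, List.length_drop, Nat.lt_min] at this
      omega
    rw [List.getElem_take, List.getElem_drop] at hpk
    obtain ⟨h', hstar⟩ := hr.2 (i + k) (by omega) (by omega)
    rw [← hpk]
    convert hstar using 2
  simpa using Language.append_mem_mul hv hnil

lemma nil_mem_take_of_reach {ts : List (Set σ × Bool)} {j : ℕ} (hr : reach ts 0 j) :
    [] ∈ chainLang (ts.take j) := by
  apply mem_take_of_reach hr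
  simp [chainLang_nil]

/-- The monitor NFA. -/
def M (ts : List (Set σ × Bool)) : NFA σ (Fin (ts.length + 1)) where
  step s a := {j | (s = 0 ∧ reach ts 0 j.val) ∨
    ∃ k, ∃ h : k < ts.length, a ∈ (ts[k]'h).1 ∧
      (reach ts s.val k ∨ (s.val = k + 1 ∧ (ts[k]'h).2 = true)) ∧ reach ts (k + 1) j.val}
  start := {j | reach ts 0 j.val}
  accept := {j | reach ts j.val ts.length}

lemma evalFrom_append (ts : List (Set σ × Bool)) (S : Set (Fin (ts.length + 1)))
    (x y : List σ) : (M ts).evalFrom S (x ++ y) = (M ts).evalFrom ((M ts).evalFrom S x) y := by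
  simp [NFA.evalFrom, List.foldl_append]

/-- Forward invariant: any state reached corresponds to a partial match. -/
lemma forward (ts : List (Set σ × Bool)) (w : List σ) :
    ∀ j ∈ (M ts).evalFrom (M ts).start w,
      ∃ u v, w = u ++ v ∧ v ∈ chainLang (ts.take j.val) := by
  induction w using List.reverseRecOn with
  | nil =>
    intro j hj
    exact ⟨[], [], rfl, nil_mem_take_of_reach hj⟩
  | append_singleton w a ih =>
    intro j hj
    rw [NFA.evalFrom_append, NFA.evalFrom_singleton, NFA.mem_stepSet] at hj
    obtain ⟨s, hs, hstep⟩ := hj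
    rcases hstep with ⟨-, hr⟩ | ⟨k, hk, ha, hmid, hpost⟩
    · exact ⟨w ++ [a], [], by simp, nil_mem_take_of_reach hr⟩
    · obtain ⟨u, v, rfl, hv⟩ := ih s hs
      have key : v ++ [a] ∈ chainLang (ts.take (k + 1)) := by
        rcases hmid with hrk | ⟨hsk, hstar⟩
        · -- v matches take k, then consume a for entry k
          have hv' : v ∈ chainLang (ts.take k) := mem_take_of_reach hrk hv
          have : ts.take (k + 1) = ts.take k ++ [ts[k]'hk] := by
            rw [← List.take_concat_get' ts k hk]
          rw [this, chainLang_append]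
          have h1 : [a] ∈ chainLang [ts[k]'hk] := by
            rw [chainLang_singleton]
            exact single_mem_entLang ha
          exact Language.append_mem_mul hv' h1
        · -- staying in the star loop of entry k
          have hts : ts.take (k + 1) = ts.take k ++ [ts[k]'hk] := by
            rw [← List.take_concat_get' ts k hk]
          rw [hsk, hts, chainLang_append, chainLang_singleton] at hv
          rw [hts, chainLang_append, chainLang_singleton]
          obtain ⟨v₀, hv₀, x, hx, hvx⟩ := Language.mem_mul.mp hv
          have hx' : x ++ [a] ∈ entLang (ts[k]'hk) := by
            unfold entLang at hx ⊢
            rw [hstar] at hx ⊢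
            simp only [if_pos] at hx ⊢
            rw [Language.mem_kstar] at hx
            obtain ⟨L, rfl, hL⟩ := hx
            have : (L ++ [[a]]).flatten ∈ KStar.kstar (singleLang (ts[k]'hk).1) := by
              apply Language.join_mem_kstar
              intro y hy
              rcases List.mem_append.mp hy with h | h
              · exact hL y h
              · simp at h; subst h; exact ⟨a, ha, rfl⟩
            simpa using this
          have hfin := Language.append_mem_mul hv₀ hx'
          rw [← hvx]
          simpa [List.append_assoc] using hfin
      exact ⟨u, v ++ [a], by rw [List.append_assoc], mem_take_of_reach hpost key⟩

/-- The start state `0` is always active. -/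
lemma zero_mem_eval (ts : List (Set σ × Bool)) (w : List σ) :
    (0 : Fin (ts.length + 1)) ∈ (M ts).evalFrom (M ts).start w := by
  induction w using List.reverseRecOn with
  | nil => exact reach_refl ts 0
  | append_singleton w a ih =>
    rw [NFA.evalFrom_append, NFA.evalFrom_singleton, NFA.mem_stepSet]
    exact ⟨0, ih, Or.inl ⟨rfl, reach_refl ts 0⟩⟩

/-- Inner loop lemma for star entries. -/
lemma star_loop (ts : List (Set σ × Bool)) {k : ℕ} (hk : k < ts.length)
    (hstar : (ts[k]'hk).2 = true) :
    ∀ L : List (List σ), (∀ y ∈ L, y ∈ singleLang (ts[k]'hk).1) →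
      ∀ S : Set (Fin (ts.length + 1)), (∃ s ∈ S, reach ts s.val k ∨ s.val = k + 1) →
        ∃ s ∈ (M ts).evalFrom S L.flatten, reach ts s.val k ∨ s.val = k + 1 := by
  intro L
  induction L with
  | nil => intro _ S hS; simpa using hS
  | cons y L ih =>
    intro hall S hS
    obtain ⟨a, ha, rfl⟩ := hall y (List.mem_cons_self)
    obtain ⟨s, hs, hsp⟩ := hS
    have hstep : (⟨k + 1, by omega⟩ : Fin (ts.length + 1)) ∈ (M ts).stepSet S a := by
      rw [NFA.mem_stepSet]
      refine ⟨s, hs, Or.inr ⟨k, hk, ha, ?_, reach_refl ts (k + 1)⟩⟩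
      rcases hsp with h | h
      · exact Or.inl h
      · exact Or.inr ⟨h, hstar⟩
    have : ([a] ++ L.flatten) = a :: L.flatten := rfl
    rw [List.flatten_cons, this]
    have heval : (M ts).evalFrom S (a :: L.flatten) =
        (M ts).evalFrom ((M ts).stepSet S a) L.flatten := rfl
    rw [heval]
    exact ih (fun y hy => hall y (List.mem_cons_of_mem _ hy)) _
      ⟨⟨k + 1, by omega⟩, hstep, Or.inr rfl⟩

/-- Backward lemma: a full match of the suffix chain starting at position `i` leads to an
accepting configuration. -/
lemma backward (ts : List (Set σ × Bool)) :
    ∀ m i, i + m = ts.length → ∀ v, v ∈ chainLang (ts.drop i) →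
      ∀ S : Set (Fin (ts.length + 1)), (∃ s ∈ S, reach ts s.val i) →
        ∃ j ∈ (M ts).evalFrom S v, reach ts j.val ts.length := by
  intro m
  induction m with
  | zero =>
    intro i him v hv S hS
    have : i = ts.length := by omega
    subst this
    rw [List.drop_length, chainLang_nil, Language.mem_one] at hv
    subst hv
    obtain ⟨s, hs, hrs⟩ := hS
    exact ⟨s, hs, hrs⟩
  | succ m ih =>
    intro i him v hv S hS
    have hi : i < ts.length := by omega
    rw [List.drop_eq_getElem_cons hi, chainLang_cons] at hv
    obtain ⟨x, hx, y, hy, rfl⟩ := Language.mem_mul.mp hv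
    rw [evalFrom_append]
    by_cases hb : (ts[i]'hi).2 = true
    · -- star entry
      unfold entLang at hx
      rw [hb] at hx
      simp only [if_pos] at hx
      rw [Language.mem_kstar] at hx
      obtain ⟨L, rfl, hL⟩ := hx
      obtain ⟨s, hs, hsp⟩ := hS
      obtain ⟨s', hs', hsp'⟩ :=
        star_loop ts hi hb L hL S ⟨s, hs, Or.inl hsp⟩
      have hr' : reach ts s'.val (i + 1) := by
        rcases hsp' with h | h
        · exact reach_trans h (reach_succ hi hb)
        · rw [h]; exact reach_refl ts (i + 1)
      exact ih (i + 1) (by omega) y hy _ ⟨s', hs', hr'⟩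
    · -- plain entry
      unfold entLang at hx
      rw [if_neg hb] at hx
      obtain ⟨a, ha, rfl⟩ := hx
      obtain ⟨s, hs, hsp⟩ := hS
      have hstep : (⟨i + 1, by omega⟩ : Fin (ts.length + 1)) ∈ (M ts).stepSet S a := by
        rw [NFA.mem_stepSet]
        exact ⟨s, hs, Or.inr ⟨i, hi, ha, Or.inl hsp, reach_refl ts (i + 1)⟩⟩
      have : (M ts).evalFrom S [a] = (M ts).stepSet S a := by simp
      rw [this]
      exact ih (i + 1) (by omega) y hy _ ⟨⟨i + 1, by omega⟩, hstep, reach_refl ts (i + 1)⟩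

end ChainMonitor

/-- Monitor automaton: for every list `ts` of `n` pairs there is an NFA over `σ` with state
type `Fin (n+1)` accepting exactly the words ending in a match of the chain, i.e. the
concatenation of the universal language over `σ` with `L(ts)`. -/
theorem chain_monitor_nfa_exists {σ : Type} (ts : List (Set σ × Bool)) :
    ∃ M : NFA σ (Fin (ts.length + 1)),
      M.accepts = {w : List σ | ∃ (u v : List σ), v ∈ chainLang ts ∧ w = u ++ v} := by
  classical
  refine ⟨ChainMonitor.M ts, ?_⟩
  ext w
  rw [NFA.mem_accepts]
  constructor
  · rintro ⟨j, hacc, heval⟩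
    obtain ⟨u, v, rfl, hv⟩ := ChainMonitor.forward ts w j heval
    refine ⟨u, v, ?_, rfl⟩
    have := ChainMonitor.mem_take_of_reach hacc hv
    rwa [List.take_length] at this
  · rintro ⟨u, v, hv, rfl⟩
    have hv' : v ∈ chainLang (ts.drop 0) := by rwa [List.drop_zero]
    obtain ⟨j, hj, hr⟩ := ChainMonitor.backward ts ts.length 0 (by omega) v hv'
      ((ChainMonitor.M ts).evalFrom (ChainMonitor.M ts).start u)
      ⟨0, ChainMonitor.zero_mem_eval ts u, by
        simpa using ChainMonitor.reach_refl ts 0⟩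
    refine ⟨j, hr, ?_⟩
    rw [ChainMonitor.evalFrom_append]
    exact hj
end

section
/- Let σ be a type and ts = [(S₁,b₁),…,(Sₙ,bₙ)] a list of n pairs of a subset of σ and a Boolean star flag. Then there exist a finite type S with card S ≤ n + 3 and a deterministic finite automaton D over the product alphabet σ × Fin (n+1) with state type S such that π(D.accepts) equals the concatenation of the universal language over σ with L(ts), i.e. {u ++ v | u : List σ, v ∈ L(ts)}. -/
namespace ChainM

variable {σ : Type}

/-- Star flag at index `k`. -/
def bk (ts : List (Set σ × Bool)) (k : ℕ) : Bool := (ts.getD k (∅, false)).2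

/-- Symbol set at index `k`. -/
def Sk (ts : List (Set σ × Bool)) (k : ℕ) : Set σ := (ts.getD k (∅, false)).1

open Classical in
/-- Transition function of the monitor. -/
noncomputable def dstep (ts : List (Set σ × Bool)) :
    Option (Fin (ts.length + 1)) → σ × Fin (ts.length + 1) → Option (Fin (ts.length + 1))
  | none, _ => none
  | some i, (a, r) =>
    if h : (r : ℕ) < ts.length then
      if ((i : ℕ) ≤ (r : ℕ) ∧ (∀ k, (i : ℕ) ≤ k → k < (r : ℕ) → bk ts k = true) ∧ a ∈ Sk ts r) then
        if bk ts r then some ⟨r, by omega⟩ else some ⟨(r : ℕ) + 1, by omega⟩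
      else none
    else if (i : ℕ) = 0 then some i else none

/-- Accepting states. -/
def daccept (ts : List (Set σ × Bool)) : Set (Option (Fin (ts.length + 1))) :=
  {s | ∃ i : Fin (ts.length + 1), s = some i ∧ ∀ k, (i : ℕ) ≤ k → k < ts.length → bk ts k = true}

noncomputable def theDFA (ts : List (Set σ × Bool)) :
    DFA (σ × Fin (ts.length + 1)) (Option (Fin (ts.length + 1))) :=
  ⟨dstep ts, some ⟨0, by omega⟩, daccept ts⟩

lemma evalFrom_none (ts : List (Set σ × Bool)) (x : List (σ × Fin (ts.length + 1))) :
    (theDFA ts).evalFrom none x = none := by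
  induction x with
  | nil => rfl
  | cons c x ih =>
      have h : (theDFA ts).step none c = none := rfl
      simpa [DFA.evalFrom, h] using ih

lemma none_not_accept (ts : List (Set σ × Bool)) : none ∉ daccept ts := by
  rintro ⟨i, h, -⟩
  exact nomatch h

lemma chain_drop (ts : List (Set σ × Bool)) {j : ℕ} (h : j < ts.length) :
    chainLang (ts.drop j) =
      (if bk ts j then KStar.kstar (singleLang (Sk ts j)) else singleLang (Sk ts j)) *
        chainLang (ts.drop (j + 1)) := by
  rw [List.drop_eq_getElem_cons h]
  simp only [chainLang, List.map_cons, List.prod_cons, bk, Sk, List.getD_eq_getElem _ _ h]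

lemma nil_mem_chain (l : List (Set σ × Bool)) (h : ∀ p ∈ l, p.2 = true) :
    [] ∈ chainLang l := by
  induction l with
  | nil => simp [chainLang, Language.mem_one]
  | cons p l ih =>
      have hp : p.2 = true := h p (by simp)
      have hl : [] ∈ chainLang l := ih fun q hq => h q (by simp [hq])
      have hε : ([] : List σ) ∈ KStar.kstar (singleLang p.1) := by
        rw [Language.mem_kstar]; exact ⟨[], by simp⟩
      simp only [chainLang, List.map_cons, List.prod_cons]
      exact Language.mem_mul.mpr ⟨[], by simp [hp, hε], [], hl, rfl⟩

lemma skip_subset (ts : List (Set σ × Bool)) {i j : ℕ} (hij : i ≤ j) (hj : j ≤ ts.length)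
    (hstar : ∀ k, i ≤ k → k < j → bk ts k = true) :
    ∀ v ∈ chainLang (ts.drop j), v ∈ chainLang (ts.drop i) := by
  induction j, hij using Nat.le_induction with
  | base => exact fun _ h => h
  | succ j hij ih =>
      have hjlt : j < ts.length := by omega
      intro v hv
      have h1 : v ∈ chainLang (ts.drop j) := by
        rw [chain_drop ts hjlt]
        have hbj : bk ts j = true := hstar j hij (by omega)
        have hε : ([] : List σ) ∈ KStar.kstar (singleLang (Sk ts j)) := by
          rw [Language.mem_kstar]; exact ⟨[], by simp⟩
        exact Language.mem_mul.mpr ⟨[], by simp [hbj, hε], v, hv, rfl⟩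
      exact ih (by omega) (fun k hk hk' => hstar k hk (by omega)) v h1

lemma cons_mem_chain_of_next (ts : List (Set σ × Bool)) {j : ℕ} (hj : j < ts.length)
    {a : σ} (ha : a ∈ Sk ts j) {v : List σ} (hv : v ∈ chainLang (ts.drop (j + 1))) :
    a :: v ∈ chainLang (ts.drop j) := by
  rw [chain_drop ts hj]
  have h1 : [a] ∈ singleLang (Sk ts j) := ⟨a, ha, rfl⟩
  have h2 : [a] ∈ (if bk ts j then KStar.kstar (singleLang (Sk ts j)) else singleLang (Sk ts j)) := by
    split
    · rw [Language.mem_kstar]; exact ⟨[[a]], by simp, by simpa⟩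
    · exact h1
  exact Language.mem_mul.mpr ⟨[a], h2, v, hv, rfl⟩

lemma cons_mem_chain_star (ts : List (Set σ × Bool)) {j : ℕ} (hj : j < ts.length)
    (hb : bk ts j = true) {a : σ} (ha : a ∈ Sk ts j) {v : List σ}
    (hv : v ∈ chainLang (ts.drop j)) : a :: v ∈ chainLang (ts.drop j) := by
  rw [chain_drop ts hj, hb] at hv ⊢
  rcases Language.mem_mul.mp hv with ⟨v₁, h1, v₂, h2, rfl⟩
  refine Language.mem_mul.mpr ⟨[a] ++ v₁, ?_, v₂, h2, by simp⟩
  simp only [if_true] at h1 ⊢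
  rcases Language.mem_kstar.mp h1 with ⟨L, rfl, hL⟩
  rw [Language.mem_kstar]
  refine ⟨[a] :: L, by simp, ?_⟩
  intro y hy
  rcases List.mem_cons.mp hy with rfl | hy'
  · exact ⟨a, ha, rfl⟩
  · exact hL y hy'

/-- Soundness: an accepting run from state `i` projects to a word of the right shape. -/
lemma sound (ts : List (Set σ × Bool)) :
    ∀ (x : List (σ × Fin (ts.length + 1))) (i : ℕ) (hi : i ≤ ts.length),
      (theDFA ts).evalFrom (some ⟨i, by omega⟩) x ∈ daccept ts →
      ∃ u v : List σ, v ∈ chainLang (ts.drop i) ∧ x.map Prod.fst = u ++ v ∧ (i ≠ 0 → u = []) := by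
  intro x
  induction x with
  | nil =>
      intro i hi hacc
      rcases hacc with ⟨i', hi', hall⟩
      have hii : (⟨i, by omega⟩ : Fin (ts.length + 1)) = i' := by
        simpa [theDFA, DFA.evalFrom] using hi'
      have hiv : (i' : ℕ) = i := by rw [← hii]
      refine ⟨[], [], ?_, rfl, fun _ => rfl⟩
      apply nil_mem_chain
      intro p hp
      rcases List.getElem_of_mem hp with ⟨k, hk, rfl⟩
      have hk0 : k < ts.length - i := by simpa using hk
      have hk2 : i + k < ts.length := by omega
      have hget : (ts.drop i)[k]'hk = ts[i + k]'hk2 := by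
        simp
      rw [hget]
      have h1 := hall (i + k) (by rw [hiv]; omega) hk2
      rwa [ChainM.bk, List.getD_eq_getElem _ _ hk2] at h1
  | cons c x ih =>
      rcases c with ⟨a, r⟩
      intro i hi hacc
      have hstep : (theDFA ts).evalFrom (some ⟨i, by omega⟩) ((a, r) :: x)
          = (theDFA ts).evalFrom (dstep ts (some ⟨i, by omega⟩) (a, r)) x := rfl
      rw [hstep] at hacc
      by_cases hr : (r : ℕ) < ts.length
      · by_cases hcond : (i ≤ (r : ℕ) ∧ (∀ k, i ≤ k → k < (r : ℕ) → bk ts k = true)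
            ∧ a ∈ Sk ts r)
        · by_cases hb : bk ts r = true
          · have hd : dstep ts (some ⟨i, by omega⟩) (a, r) = some ⟨(r : ℕ), by omega⟩ := by
              show (if h : (r : ℕ) < ts.length then _ else _) = _
              rw [dif_pos hr, if_pos hcond, if_pos hb]
            rw [hd] at hacc
            rcases ih (r : ℕ) (by omega) hacc with ⟨u, v, hv, hmap, hu⟩
            by_cases hr0 : (r : ℕ) = 0
            · have hi0 : i = 0 := by omega
              subst hi0
              refine ⟨a :: u, v, ?_, by simp [hmap], by simp⟩
              rw [hr0] at hv
              exact hv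
            · have hu' : u = [] := hu hr0
              subst hu'
              have hav : a :: v ∈ chainLang (ts.drop (r : ℕ)) :=
                cons_mem_chain_star ts hr hb hcond.2.2 hv
              refine ⟨[], a :: v, ?_, by simp [hmap], fun _ => rfl⟩
              exact skip_subset ts hcond.1 (by omega) hcond.2.1 _ hav
          · have hd : dstep ts (some ⟨i, by omega⟩) (a, r) = some ⟨(r : ℕ) + 1, by omega⟩ := by
              show (if h : (r : ℕ) < ts.length then _ else _) = _
              rw [dif_pos hr, if_pos hcond, if_neg (by simp [hb])]
            rw [hd] at hacc
            rcases ih ((r : ℕ) + 1) (by omega) hacc with ⟨u, v, hv, hmap, hu⟩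
            have hu' : u = [] := hu (by omega)
            subst hu'
            have hav : a :: v ∈ chainLang (ts.drop (r : ℕ)) :=
              cons_mem_chain_of_next ts hr hcond.2.2 hv
            refine ⟨[], a :: v, ?_, by simp [hmap], fun _ => rfl⟩
            exact skip_subset ts hcond.1 (by omega) hcond.2.1 _ hav
        · have hd : dstep ts (some ⟨i, by omega⟩) (a, r) = none := by
            show (if h : (r : ℕ) < ts.length then _ else _) = _
            rw [dif_pos hr, if_neg hcond]
          rw [hd, evalFrom_none] at hacc
          exact absurd hacc (none_not_accept ts)
      · by_cases hi0 : i = 0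
        · have hd : dstep ts (some ⟨i, by omega⟩) (a, r) = some ⟨i, by omega⟩ := by
            show (if h : (r : ℕ) < ts.length then _ else _) = _
            rw [dif_neg hr, if_pos hi0]
          rw [hd] at hacc
          rcases ih i hi hacc with ⟨u, v, hv, hmap, hu⟩
          exact ⟨a :: u, v, hv, by simp [hmap], fun h => absurd hi0 h⟩
        · have hd : dstep ts (some ⟨i, by omega⟩) (a, r) = none := by
            show (if h : (r : ℕ) < ts.length then _ else _) = _
            rw [dif_neg hr, if_neg hi0]
          rw [hd, evalFrom_none] at hacc
          exact absurd hacc (none_not_accept ts)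

lemma letters_of_kstar {S : Set σ} {v : List σ} (hv : v ∈ KStar.kstar (singleLang S)) :
    ∀ a ∈ v, a ∈ S := by
  rcases Language.mem_kstar.mp hv with ⟨L, rfl, hL⟩
  intro a ha
  rcases List.mem_flatten.mp ha with ⟨y, hy, hay⟩
  rcases hL y hy with ⟨b, hb, rfl⟩
  rwa [List.mem_singleton.mp hay]

/-- Completeness. -/
lemma complete (ts : List (Set σ × Bool)) :
    ∀ (l : List (Set σ × Bool)) (i : ℕ), ts.drop i = l → ∀ i' : ℕ, ∀ hi' : i' ≤ i, ∀ hi : i ≤ ts.length,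
      (∀ k, i' ≤ k → k < i → bk ts k = true) →
      ∀ v ∈ chainLang l, ∃ x : List (σ × Fin (ts.length + 1)),
        x.map Prod.fst = v ∧
          (theDFA ts).evalFrom (some ⟨i', by omega⟩) x ∈ daccept ts := by
  intro l
  induction l with
  | nil =>
      intro i hdrop i' hi' hi hall v hv
      have hv0 : v = [] := by
        simpa [chainLang, Language.mem_one] using hv
      subst hv0
      have hlen : ts.length ≤ i := by
        by_contra h
        push_neg at h
        have := List.drop_eq_getElem_cons h
        rw [hdrop] at this
        exact nomatch this
      refine ⟨[], rfl, ⟨⟨i', by omega⟩, rfl, ?_⟩⟩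
      intro k hk hk'
      exact hall k (by simpa using hk) (by omega)
  | cons p l ihl =>
      intro i hdrop i' hi' hi hall v hv
      have hilt : i < ts.length := by
        by_contra h
        push_neg at h
        rw [List.drop_eq_nil_of_le h] at hdrop
        exact nomatch hdrop
      have hd2 := List.drop_eq_getElem_cons hilt
      rw [hdrop] at hd2
      injection hd2 with hp hl
      have hbk : bk ts i = p.2 := by rw [bk, List.getD_eq_getElem _ _ hilt, hp]
      have hSk : Sk ts i = p.1 := by rw [Sk, List.getD_eq_getElem _ _ hilt, hp]
      simp only [chainLang, List.map_cons, List.prod_cons] at hv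
      rcases Language.mem_mul.mp hv with ⟨v₁, h1, v₂, h2, rfl⟩
      have h2' : v₂ ∈ chainLang l := h2
      by_cases hb : p.2 = true
      · rw [hb, if_pos rfl] at h1
        have hlet : ∀ a ∈ v₁, a ∈ p.1 := letters_of_kstar h1
        clear h1 hv
        revert i'
        revert hlet
        induction v₁ with
        | nil =>
            intro hlet i' hi' hall
            rcases ihl (i + 1) (by rw [hl]) i' (by omega) (by omega)
              (fun k hk hk' => by
                rcases Nat.lt_succ_iff_lt_or_eq.mp hk' with h | h
                · exact hall k hk h
                · subst h; rw [hbk]; exact hb) v₂ h2' with ⟨x, hx1, hx2⟩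
            exact ⟨x, by simpa using hx1, hx2⟩
        | cons a rest ihv =>
            intro hlet i' hi' hall
            have ha : a ∈ p.1 := hlet a (by simp)
            rcases ihv (fun b hb' => hlet b (by simp [hb'])) i le_rfl (fun k hk hk' => absurd hk' (by omega))
              with ⟨x, hx1, hx2⟩
            refine ⟨(a, ⟨i, by omega⟩) :: x, by simpa using hx1, ?_⟩
            have hd : dstep ts (some ⟨i', by omega⟩) (a, ⟨i, by omega⟩)
                = some ⟨i, by omega⟩ := by
              show (if h : _ < ts.length then _ else _) = _
              rw [dif_pos (by simpa using hilt)]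
              rw [if_pos ⟨by simpa using hi', fun k hk hk' => by
                  simp at hk hk'; exact hall k hk hk',
                by simpa [hSk] using ha⟩]
              rw [if_pos (by simpa [hbk] using hb)]
            have hstep : (theDFA ts).evalFrom (some ⟨i', by omega⟩) ((a, ⟨i, by omega⟩) :: x)
                = (theDFA ts).evalFrom (dstep ts (some ⟨i', by omega⟩) (a, ⟨i, by omega⟩)) x := rfl
            rw [hstep, hd]
            exact hx2
      · rw [if_neg hb] at h1
        rcases h1 with ⟨a, ha, rfl⟩
        rcases ihl (i + 1) (by rw [hl]) (i + 1) le_rfl (by omega)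
            (fun k hk hk' => absurd hk' (by omega)) v₂ h2' with ⟨x, hx1, hx2⟩
        refine ⟨(a, ⟨i, by omega⟩) :: x, by simpa using hx1, ?_⟩
        have hd : dstep ts (some ⟨i', by omega⟩) (a, ⟨i, by omega⟩)
            = some ⟨i + 1, by omega⟩ := by
          show (if h : _ < ts.length then _ else _) = _
          rw [dif_pos (by simpa using hilt)]
          rw [if_pos ⟨by simpa using hi', fun k hk hk' => by simp at hk hk'; exact hall k hk hk',
            by simpa [hSk] using ha⟩]
          rw [if_neg (by simp [hbk, hb])]
        have hstep : (theDFA ts).evalFrom (some ⟨i', by omega⟩) ((a, ⟨i, by omega⟩) :: x)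
            = (theDFA ts).evalFrom (dstep ts (some ⟨i', by omega⟩) (a, ⟨i, by omega⟩)) x := rfl
        rw [hstep, hd]
        exact hx2

lemma noise_eval (ts : List (Set σ × Bool)) (u : List σ) :
    (theDFA ts).evalFrom (some ⟨0, by omega⟩)
      (u.map fun a => (a, (⟨ts.length, by omega⟩ : Fin (ts.length + 1))))
      = some ⟨0, by omega⟩ := by
  induction u with
  | nil => rfl
  | cons a u ih =>
      have hd : dstep ts (some ⟨0, by omega⟩)
          (a, (⟨ts.length, by omega⟩ : Fin (ts.length + 1))) = some ⟨0, by omega⟩ := by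
        show (if h : _ < ts.length then _ else _) = _
        rw [dif_neg (by simp), if_pos rfl]
      have hstep : (theDFA ts).evalFrom (some ⟨0, by omega⟩)
          (((a, (⟨ts.length, by omega⟩ : Fin (ts.length + 1)))) ::
            (u.map fun a => (a, (⟨ts.length, by omega⟩ : Fin (ts.length + 1)))))
          = (theDFA ts).evalFrom (dstep ts (some ⟨0, by omega⟩)
              (a, (⟨ts.length, by omega⟩ : Fin (ts.length + 1))))
              (u.map fun a => (a, (⟨ts.length, by omega⟩ : Fin (ts.length + 1)))) := rfl
      simp only [List.map_cons]
      rw [hstep, hd, ih]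

end ChainM

/-- Deterministic monitor circuit: for every list `ts` of `n` pairs there exist a finite
type `S` with `card S ≤ n + 3` and a DFA `D` over the product alphabet `σ × Fin (n+1)` with
state type `S` such that `π(D.accepts)` is exactly the set of words ending in a match of
the chain, i.e. the concatenation of the universal language over `σ` with `L(ts)`. -/
theorem chain_monitor_dfa_free_inputs {σ : Type} (ts : List (Set σ × Bool)) :
    ∃ (S : Type) (_ : Fintype S), Fintype.card S ≤ ts.length + 3 ∧
      ∃ D : DFA (σ × Fin (ts.length + 1)) S,
        projLang D.accepts = {w : List σ | ∃ (u v : List σ), v ∈ chainLang ts ∧ w = u ++ v} := by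
  refine ⟨Option (Fin (ts.length + 1)), inferInstance, by simp, ChainM.theDFA ts, ?_⟩
  ext w
  constructor
  · rintro ⟨x, hx, rfl⟩
    change x ∈ (ChainM.theDFA ts).accepts at hx
    rw [DFA.mem_accepts] at hx
    have hx' : (ChainM.theDFA ts).evalFrom (some ⟨0, by omega⟩) x ∈ ChainM.daccept ts := hx
    rcases ChainM.sound ts x 0 (by omega) hx' with ⟨u, v, hv, hmap, -⟩
    exact ⟨u, v, by simpa using hv, hmap⟩
  · rintro ⟨u, v, hv, rfl⟩
    rcases ChainM.complete ts ts 0 (by simp) 0 le_rfl (by omega) (fun k hk hk' => absurd hk' (by omega))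
      v hv with ⟨x, hx1, hx2⟩
    refine ⟨(u.map fun a => (a, (⟨ts.length, by omega⟩ : Fin (ts.length + 1)))) ++ x, ?_, ?_⟩
    · change _ ∈ (ChainM.theDFA ts).accepts
      rw [DFA.mem_accepts]
      show (ChainM.theDFA ts).evalFrom _ _ ∈ _
      rw [DFA.evalFrom_of_append]
      have := ChainM.noise_eval ts u
      rw [show (ChainM.theDFA ts).start = some ⟨0, by omega⟩ from rfl, this]
      exact hx2
    · simp [hx1, Function.comp_def]
end
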